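/- For an orthogonal projection P ∈ M_n and any subset J ⊆ {1,...,n}, the dimension of span{P e_i : i ∈ J} is at least Σ_{i ∈ J} ‖P e_i‖^2. -/

import Mathlib

open Matrix

private lemma euclid_sum_norm_sq {ι : Type*} [Fintype ι] (u : EuclideanSpace ℂ ι) :
    ∑ i, ‖u i‖ ^ 2 = ‖u‖ ^ 2 := by
  rw [EuclideanSpace.norm_eq, Real.sq_sqrt (by positivity)]

open scoped ComplexInnerProductSpace

/-- For an orthogonal projection `P ∈ M_n(ℂ)` and any `J ⊆ {1,...,n}`, the dimension of the
span of `{P e_i : i ∈ J}` is at least `Σ_{i ∈ J} ‖P e_i‖²`. -/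
theorem finrank_span_ge_sum_norm_sq
    {n : ℕ} (P : Matrix (Fin n) (Fin n) ℂ)
    (hP : P.IsHermitian) (hP2 : P * P = P)
    (J : Finset (Fin n))
    (v : Fin n → EuclideanSpace ℂ (Fin n))
    (hv : ∀ i, v i = Matrix.toEuclideanLin P (EuclideanSpace.single i 1)) :
    ∑ i ∈ J, ‖v i‖ ^ 2 ≤
      (Module.finrank ℂ (Submodule.span ℂ (v '' (J : Set (Fin n)))) : ℝ) := by
  classical
  set A : EuclideanSpace ℂ (Fin n) →ₗ[ℂ] EuclideanSpace ℂ (Fin n) :=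
    Matrix.toEuclideanLin P with hA
  set e : Fin n → EuclideanSpace ℂ (Fin n) := fun i => EuclideanSpace.single i 1 with he
  -- A is idempotent
  have hAA : ∀ x : EuclideanSpace ℂ (Fin n), A (A x) = A x := by
    intro x
    simp only [hA, Matrix.toEuclideanLin_apply, Equiv.apply_symm_apply,
      Matrix.mulVec_mulVec, hP2]
  -- A is symmetric
  have hadj : LinearMap.adjoint A = A := by
    rw [hA, ← Matrix.toEuclideanLin_conjTranspose_eq_adjoint, hP.eq]
  have hsym : ∀ x y : EuclideanSpace ℂ (Fin n), ⟪A x, y⟫ = ⟪x, A y⟫ := by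
    intro x y
    conv_lhs => rw [← hadj]
    exact LinearMap.adjoint_inner_left A y x
  set V := Submodule.span ℂ (v '' (J : Set (Fin n))) with hV
  set Q : EuclideanSpace ℂ (Fin n) → EuclideanSpace ℂ (Fin n) :=
    fun x => (V.orthogonalProjectionOnto x : EuclideanSpace ℂ (Fin n)) with hQ
  -- Step A: for i ∈ J, ‖v i‖² ≤ ‖Q (e i)‖²
  have stepA : ∀ i ∈ J, ‖v i‖ ^ 2 ≤ ‖Q (e i)‖ ^ 2 := by
    intro i hi
    have hmem : v i ∈ V := Submodule.subset_span ⟨i, hi, rfl⟩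
    have hinner : ⟪v i, e i⟫ = ((‖v i‖ : ℂ)) ^ 2 := by
      rw [hv i]
      calc ⟪A (e i), e i⟫ = ⟪A (A (e i)), e i⟫ := by rw [hAA]
        _ = ⟪A (e i), A (e i)⟫ := hsym (A (e i)) (e i)
        _ = ((‖A (e i)‖ : ℂ)) ^ 2 := inner_self_eq_norm_sq_to_K _
    have horth : ⟪v i, e i - Q (e i)⟫ = 0 := by
      have h0 : ⟪e i - Q (e i), v i⟫ = 0 :=
        Submodule.starProjection_inner_eq_zero (K := V) (e i) (v i) hmem
      rw [← inner_conj_symm, h0, map_zero]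
    have h2 : ⟪v i, e i⟫ = ⟪v i, Q (e i)⟫ := by
      rw [inner_sub_right] at horth
      linear_combination horth
    have h3 : ‖v i‖ ^ 2 ≤ ‖v i‖ * ‖Q (e i)‖ := by
      have hcs := norm_inner_le_norm (𝕜 := ℂ) (v i) (Q (e i))
      have hnn : ‖⟪v i, Q (e i)⟫‖ = ‖v i‖ ^ 2 := by
        rw [← h2, hinner]
        simp [← Complex.ofReal_pow]
      linarith
    nlinarith [norm_nonneg (v i), norm_nonneg (Q (e i)), sq_nonneg (‖v i‖ - ‖Q (e i)‖)]
  -- step B: the sum of ‖Q (e i)‖² over all i equals finrank V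
  set d := Module.finrank ℂ V with hd
  set b := stdOrthonormalBasis ℂ V with hb
  have hQsq : ∀ x : EuclideanSpace ℂ (Fin n),
      ‖Q x‖ ^ 2 = ∑ j, ‖⟪((b j : EuclideanSpace ℂ (Fin n))), x⟫‖ ^ 2 := by
    intro x
    have h1 : ‖Q x‖ = ‖b.repr (V.orthogonalProjectionOnto x)‖ := by
      rw [b.repr.norm_map]
      simp [hQ]
    rw [h1, ← euclid_sum_norm_sq (b.repr (V.orthogonalProjectionOnto x))]
    congr 1
    ext j
    rw [b.repr_apply_apply, Submodule.inner_orthogonalProjectionOnto_eq_of_mem_left]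
  have stepB : ∑ i, ‖Q (e i)‖ ^ 2 = (d : ℝ) := by
    have hone : ∀ j : Fin d, ∑ i, ‖⟪((b j : EuclideanSpace ℂ (Fin n))), e i⟫‖ ^ 2 = 1 := by
      intro j
      have hcoord : ∀ i, ‖⟪((b j : EuclideanSpace ℂ (Fin n))), e i⟫‖
          = ‖(b j : EuclideanSpace ℂ (Fin n)) i‖ := by
        intro i
        rw [he]
        rw [EuclideanSpace.inner_single_right i (1 : ℂ) (b j : EuclideanSpace ℂ (Fin n)),
          one_mul]
        exact RCLike.norm_conj _
      simp_rw [hcoord]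
      rw [euclid_sum_norm_sq ((b j : EuclideanSpace ℂ (Fin n)))]
      have hb1 : ‖(b j : EuclideanSpace ℂ (Fin n))‖ = 1 := by
        rw [Submodule.norm_coe]
        exact b.orthonormal.1 j
      rw [hb1, one_pow]
    calc ∑ i, ‖Q (e i)‖ ^ 2
        = ∑ i, ∑ j, ‖⟪((b j : EuclideanSpace ℂ (Fin n))), e i⟫‖ ^ 2 := by
          simp_rw [hQsq]
      _ = ∑ j, ∑ i, ‖⟪((b j : EuclideanSpace ℂ (Fin n))), e i⟫‖ ^ 2 := Finset.sum_comm
      _ = ∑ j : Fin d, (1 : ℝ) := by simp_rw [hone]; rfl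
      _ = (d : ℝ) := by simp
  calc ∑ i ∈ J, ‖v i‖ ^ 2 ≤ ∑ i ∈ J, ‖Q (e i)‖ ^ 2 := Finset.sum_le_sum stepA
    _ ≤ ∑ i, ‖Q (e i)‖ ^ 2 := Finset.sum_le_sum_of_subset_of_nonneg (Finset.subset_univ J)
        (fun i _ _ => by positivity)
    _ = (d : ℝ) := stepB
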